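/- (Monotone Convergence Theorem) Let (X, 𝒰, ∫) be a complete Daniell space and let (f_n) be a sequence in 𝒰 that is pointwise monotone (non-increasing or non-decreasing) and satisfies |∫f_n| ≤ M for some constant M and all n ∈ ℕ. Then there exists f ∈ 𝒰 such that ∫|f_n − f| → 0, f_n(x) → f(x) for all x outside a null set, and |∫f| ≤ M. -/

import Mathlib

open Filter Topology

/-- A Daniell space: a Riesz space `U` of real-valued functions on `X` together with a
positive linear functional `integral` satisfying the Daniell continuity condition (II). -/
structure DaniellSpace (X : Type*) where
  U : Set (X → ℝ)
  integral : (X → ℝ) → ℝ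
  zero_mem : (0 : X → ℝ) ∈ U
  add_mem : ∀ {f g : X → ℝ}, f ∈ U → g ∈ U → f + g ∈ U
  smul_mem : ∀ (c : ℝ) {f : X → ℝ}, f ∈ U → c • f ∈ U
  sup_mem : ∀ {f g : X → ℝ}, f ∈ U → g ∈ U → f ⊔ g ∈ U
  inf_mem : ∀ {f g : X → ℝ}, f ∈ U → g ∈ U → f ⊓ g ∈ U
  integral_add : ∀ {f g : X → ℝ}, f ∈ U → g ∈ U →
    integral (f + g) = integral f + integral g
  integral_smul : ∀ (c : ℝ) {f : X → ℝ}, f ∈ U → integral (c • f) = c * integral f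
  integral_nonneg : ∀ {f : X → ℝ}, f ∈ U → (∀ x, 0 ≤ f x) → 0 ≤ integral f
  integral_tendsto_zero : ∀ f : ℕ → X → ℝ, (∀ n, f n ∈ U) → Antitone f →
    (∀ x, Tendsto (fun n => f n x) atTop (𝓝 (0 : ℝ))) →
    Tendsto (fun n => integral (f n)) atTop (𝓝 (0 : ℝ))

/-- `f ≃ ∑ fₙ` : the `fₙ` belong to `U`, `∑ ∫|fₙ| < ∞`, and `f x = ∑ fₙ x` at every
point where the series converges absolutely. -/
def DaniellSpace.Rep {X : Type*} (D : DaniellSpace X) (f : X → ℝ) (fs : ℕ → X → ℝ) : Prop :=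
  (∀ n, fs n ∈ D.U) ∧ (Summable fun n => D.integral |fs n|) ∧
  ∀ x, (Summable fun n => |fs n x|) → HasSum (fun n => fs n x) (f x)

/-- The extension `𝒰*` of `𝒰`. -/
def DaniellSpace.Ustar {X : Type*} (D : DaniellSpace X) : Set (X → ℝ) :=
  {f | ∃ fs, D.Rep f fs}

-- The integral on `𝒰*`: `∫ f = ∑ ∫ fₙ` for any representation `f ≃ ∑ fₙ`
-- (the value is independent of the representation).
open Classical in
noncomputable def DaniellSpace.integralStar {X : Type*} (D : DaniellSpace X)
    (f : X → ℝ) : ℝ :=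
  if h : ∃ fs, D.Rep f fs then ∑' n, D.integral (h.choose n) else 0

/-- A Daniell space is complete if `f ≃ ∑ fₙ` with all `fₙ ∈ 𝒰` implies `f ∈ 𝒰`. -/
def DaniellSpace.Complete {X : Type*} (D : DaniellSpace X) : Prop :=
  ∀ (f : X → ℝ) (fs : ℕ → X → ℝ), D.Rep f fs → f ∈ D.U

/-- A null set: its characteristic function is a null function. -/
def DaniellSpace.NullSet {X : Type*} (D : DaniellSpace X) (S : Set X) : Prop :=
  S.indicator (fun _ => (1 : ℝ)) ∈ D.U ∧ D.integral (S.indicator fun _ => (1 : ℝ)) = 0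

namespace DaniellSpace

variable {X : Type*} (D : DaniellSpace X)

lemma neg_mem' {f : X → ℝ} (hf : f ∈ D.U) : -f ∈ D.U := by
  simpa using D.smul_mem (-1) hf

lemma sub_mem' {f g : X → ℝ} (hf : f ∈ D.U) (hg : g ∈ D.U) : f - g ∈ D.U := by
  simpa [sub_eq_add_neg] using D.add_mem hf (D.neg_mem' hg)

lemma integral_neg' {f : X → ℝ} (hf : f ∈ D.U) :
    D.integral (-f) = -D.integral f := by
  simpa using D.integral_smul (-1) hf

lemma integral_sub' {f g : X → ℝ} (hf : f ∈ D.U) (hg : g ∈ D.U) :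
    D.integral (f - g) = D.integral f - D.integral g := by
  rw [sub_eq_add_neg, D.integral_add hf (D.neg_mem' hg), D.integral_neg' hg,
    sub_eq_add_neg]

lemma integral_mono' {f g : X → ℝ} (hf : f ∈ D.U) (hg : g ∈ D.U)
    (h : ∀ x, f x ≤ g x) : D.integral f ≤ D.integral g := by
  have h0 : 0 ≤ D.integral (g - f) :=
    D.integral_nonneg (D.sub_mem' hg hf) fun x => by simpa using h x
  rw [D.integral_sub' hg hf] at h0
  linarith

lemma abs_mem' {f : X → ℝ} (hf : f ∈ D.U) : |f| ∈ D.U := by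
  have h : |f| = f ⊔ (-f) := by
    funext x
    simp [Pi.sup_apply, abs_eq_max_neg]
  rw [h]
  exact D.sup_mem hf (D.neg_mem' hf)

lemma abs_integral_le' {f : X → ℝ} (hf : f ∈ D.U) :
    |D.integral f| ≤ D.integral |f| := by
  rw [abs_le]
  constructor
  · have h := D.integral_mono' (D.neg_mem' hf) (D.abs_mem' hf)
      (fun x => by simpa using neg_le_abs (f x))
    rw [D.integral_neg' hf] at h
    linarith
  · exact D.integral_mono' hf (D.abs_mem' hf) fun x => le_abs_self (f x)

lemma integral_zero' : D.integral 0 = 0 := by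
  simpa using D.integral_smul 0 D.zero_mem

lemma sum_mem' (g : ℕ → X → ℝ) (hg : ∀ n, g n ∈ D.U) (N : ℕ) :
    (∑ i ∈ Finset.range N, g i) ∈ D.U := by
  induction N with
  | zero => simpa using D.zero_mem
  | succ N ih => rw [Finset.sum_range_succ]; exact D.add_mem ih (hg N)

lemma integral_sum' (g : ℕ → X → ℝ) (hg : ∀ n, g n ∈ D.U) (N : ℕ) :
    D.integral (∑ i ∈ Finset.range N, g i) = ∑ i ∈ Finset.range N, D.integral (g i) := by
  induction N with
  | zero => simpa using D.integral_zero'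
  | succ N ih =>
      rw [Finset.sum_range_succ, Finset.sum_range_succ,
        D.integral_add (D.sum_mem' g hg N) (hg N), ih]

/-- Functions vanishing off a null set integrate to zero (nonnegative case). -/
lemma integral_eq_zero_of_null_support {S : Set X} (hS : D.NullSet S)
    {v : X → ℝ} (hv : v ∈ D.U) (hv0 : ∀ x, 0 ≤ v x) (hvS : ∀ x ∉ S, v x = 0) :
    D.integral v = 0 := by
  set χ : X → ℝ := S.indicator fun _ => 1 with hχdef
  have hχU : χ ∈ D.U := hS.1
  have hχ0 : ∀ x, 0 ≤ χ x := fun x => Set.indicator_nonneg (fun _ _ => zero_le_one) x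
  set r : ℕ → X → ℝ := fun k => v - v ⊓ ((k : ℝ) • χ) with hrdef
  have hinfU : ∀ k : ℕ, (v ⊓ ((k : ℝ) • χ)) ∈ D.U :=
    fun k => D.inf_mem hv (D.smul_mem _ hχU)
  have hrU : ∀ k, r k ∈ D.U := fun k => D.sub_mem' hv (hinfU k)
  have hrmono : Antitone r := by
    intro k l hkl x
    simp only [hrdef, Pi.sub_apply, Pi.inf_apply, Pi.smul_apply, smul_eq_mul]
    have h1 : (k : ℝ) * χ x ≤ (l : ℝ) * χ x :=
      mul_le_mul_of_nonneg_right (by exact_mod_cast hkl) (hχ0 x)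
    have h2 : min (v x) ((k : ℝ) * χ x) ≤ min (v x) ((l : ℝ) * χ x) :=
      min_le_min le_rfl h1
    linarith
  have hrlim : ∀ x, Tendsto (fun k => r k x) atTop (𝓝 0) := by
    intro x
    by_cases hx : x ∈ S
    · have hχx : χ x = 1 := by simp [hχdef, Set.indicator_of_mem hx]
      have hev : ∀ᶠ k : ℕ in atTop, r k x = 0 := by
        filter_upwards [eventually_ge_atTop ⌈v x⌉₊] with k hk
        have h1 : v x ≤ (k : ℝ) := (Nat.le_ceil (v x)).trans (by exact_mod_cast hk)
        simp [hrdef, Pi.sub_apply, Pi.inf_apply, Pi.smul_apply, smul_eq_mul,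
          hχx, min_eq_left h1]
      exact Tendsto.congr' (by filter_upwards [hev] with N hN using hN.symm) tendsto_const_nhds
    · have hvx : v x = 0 := hvS x hx
      have hχx : χ x = 0 := Set.indicator_of_notMem hx _
      have h0 : ∀ k : ℕ, r k x = 0 := by
        intro k
        simp [hrdef, Pi.sub_apply, Pi.inf_apply, Pi.smul_apply, smul_eq_mul,
          hχx, hvx]
      simpa [h0] using tendsto_const_nhds (α := ℝ) (f := atTop (α := ℕ))
  have h1 := D.integral_tendsto_zero r hrU hrmono hrlim
  have h2 : ∀ k : ℕ, D.integral (r k) = D.integral v := by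
    intro k
    have hinf0 : D.integral (v ⊓ ((k : ℝ) • χ)) = 0 := by
      apply le_antisymm
      · have hle : D.integral (v ⊓ ((k : ℝ) • χ)) ≤ D.integral ((k : ℝ) • χ) :=
          D.integral_mono' (hinfU k) (D.smul_mem _ hχU) fun x => by
            simp only [Pi.inf_apply]; exact min_le_right _ _
        rw [D.integral_smul _ hχU, hS.2, mul_zero] at hle
        exact hle
      · refine D.integral_nonneg (hinfU k) fun x => ?_
        simp only [Pi.inf_apply, Pi.smul_apply, smul_eq_mul]
        exact le_min (hv0 x) (mul_nonneg (Nat.cast_nonneg k) (hχ0 x))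
    rw [hrdef]
    simp only
    rw [D.integral_sub' hv (hinfU k), hinf0, sub_zero]
  have h3 : Tendsto (fun _ : ℕ => D.integral v) atTop (𝓝 0) :=
    h1.congr fun k => h2 k
  exact tendsto_nhds_unique tendsto_const_nhds h3

/-- Telescoping differences of a sequence. -/
def tele (fs : ℕ → X → ℝ) : ℕ → X → ℝ
  | 0 => fs 0
  | (n + 1) => fs (n + 1) - fs n

lemma tele_sum (fs : ℕ → X → ℝ) (x : X) : ∀ N : ℕ,
    ∑ i ∈ Finset.range (N + 1), tele fs i x = fs N x := by
  intro N
  induction N with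
  | zero => simp [tele]
  | succ N ih =>
      rw [Finset.sum_range_succ, ih]
      simp [tele]

end DaniellSpace

open DaniellSpace in
theorem daniell_mct_mono {X : Type*} [Nonempty X] (D : DaniellSpace X)
    (hD : D.Complete) (fs : ℕ → X → ℝ) (hfs : ∀ n, fs n ∈ D.U)
    (hmono : Monotone fs)
    (M : ℝ) (hM : ∀ n, |D.integral (fs n)| ≤ M) :
    ∃ f ∈ D.U,
      Tendsto (fun n => D.integral |fs n - f|) atTop (𝓝 (0 : ℝ)) ∧
      (∃ S : Set X, D.NullSet S ∧ ∀ x ∉ S, Tendsto (fun n => fs n x) atTop (𝓝 (f x))) ∧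
      |D.integral f| ≤ M := by
  classical
  set hs : ℕ → X → ℝ := tele fs with hhs
  have hs_zero : hs 0 = fs 0 := rfl
  have hs_succ : ∀ m, hs (m + 1) = fs (m + 1) - fs m := fun m => rfl
  have hsU : ∀ n, hs n ∈ D.U := by
    intro n
    cases n with
    | zero => exact hfs 0
    | succ m => exact D.sub_mem' (hfs _) (hfs _)
  have hs_nonneg : ∀ m x, 0 ≤ hs (m + 1) x := by
    intro m x
    have h := hmono (Nat.le_succ m) x
    rw [hs_succ]
    simp only [Pi.sub_apply]
    linarith
  have hM0 : 0 ≤ M := le_trans (abs_nonneg _) (hM 0)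
  set a : ℕ → ℝ := fun n => D.integral |hs n| with hadef
  have ha_nonneg : ∀ n, 0 ≤ a n :=
    fun n => D.integral_nonneg (D.abs_mem' (hsU n)) fun x => by
      simp [Pi.abs_apply]
  have ha_succ : ∀ m, a (m + 1) = D.integral (fs (m + 1)) - D.integral (fs m) := by
    intro m
    have habs : |hs (m + 1)| = hs (m + 1) := by
      funext x
      exact abs_of_nonneg (hs_nonneg m x)
    rw [hadef]
    simp only
    rw [habs, hs_succ, D.integral_sub' (hfs _) (hfs _)]
  have ha_bound : ∀ N, ∑ i ∈ Finset.range N, a i ≤ D.integral |fs 0| + 2 * M := by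
    intro N
    have habs0 : 0 ≤ D.integral |fs 0| :=
      D.integral_nonneg (D.abs_mem' (hfs 0)) fun x => by simp [Pi.abs_apply]
    cases N with
    | zero => simp; linarith
    | succ K =>
        rw [Finset.sum_range_succ']
        have h1 : ∑ i ∈ Finset.range K, a (i + 1)
            = D.integral (fs K) - D.integral (fs 0) := by
          rw [Finset.sum_congr rfl fun i _ => ha_succ i]
          exact Finset.sum_range_sub (fun n => D.integral (fs n)) K
        have h2 : a 0 = D.integral |fs 0| := by simp only [hadef]; rw [hs_zero]
        have h3 := abs_le.mp (hM K)
        have h4 := abs_le.mp (hM 0)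
        rw [h1, h2]
        linarith
  have ha_summable : Summable a :=
    summable_of_sum_range_le ha_nonneg ha_bound
  set S : Set X := {x | ¬ Summable fun n => |hs n x|} with hSdef
  set f₀ : X → ℝ := fun x => if Summable (fun n => |hs n x|) then ∑' n, hs n x else 0
    with hf₀def
  have hrep : D.Rep f₀ hs := by
    refine ⟨hsU, ?_, ?_⟩
    · exact ha_summable
    · intro x hx
      have : f₀ x = ∑' n, hs n x := by rw [hf₀def]; simp [if_pos hx]
      rw [this]
      exact (Summable.of_abs hx).hasSum
  have hf₀U : f₀ ∈ D.U := hD f₀ hs hrep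
  -- convergence off S
  have hconv : ∀ x, Summable (fun n => |hs n x|) →
      Tendsto (fun N => fs N x) atTop (𝓝 (f₀ x)) := by
    intro x hx
    have h1 := (Summable.of_abs hx).hasSum.tendsto_sum_nat
    have h2 := h1.comp (Filter.tendsto_add_atTop_nat 1)
    have h3 : Tendsto (fun N => fs N x) atTop (𝓝 (∑' n, hs n x)) := by
      refine h2.congr fun N => ?_
      simpa using tele_sum fs x N
    have : f₀ x = ∑' n, hs n x := by rw [hf₀def]; simp [if_pos hx]
    rw [this]
    exact h3
  -- divergence on S
  have hdiv : ∀ x, ¬ Summable (fun n => |hs n x|) →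
      Tendsto (fun N => fs N x) atTop atTop := by
    intro x hx
    have hB := (not_summable_iff_tendsto_nat_atTop_of_nonneg
      (fun n => abs_nonneg (hs n x))).mp hx
    have key : ∀ N, fs N x
        = (hs 0 x - |hs 0 x|) + ∑ i ∈ Finset.range (N + 1), |hs i x| := by
      intro N
      have h1 : ∑ i ∈ Finset.range (N + 1), hs i x = fs N x := tele_sum fs x N
      have h2 : ∑ i ∈ Finset.range (N + 1), |hs i x|
          = ∑ i ∈ Finset.range N, |hs (i + 1) x| + |hs 0 x| :=
        Finset.sum_range_succ' _ N
      have h3 : ∑ i ∈ Finset.range (N + 1), hs i x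
          = ∑ i ∈ Finset.range N, hs (i + 1) x + hs 0 x :=
        Finset.sum_range_succ' _ N
      have h4 : ∑ i ∈ Finset.range N, |hs (i + 1) x|
          = ∑ i ∈ Finset.range N, hs (i + 1) x :=
        Finset.sum_congr rfl fun i _ => abs_of_nonneg (hs_nonneg i x)
      linarith
    have hB2 : Tendsto (fun N => ∑ i ∈ Finset.range (N + 1), |hs i x|) atTop atTop :=
      hB.comp (Filter.tendsto_add_atTop_nat 1)
    have h5 := tendsto_atTop_add_const_left atTop (hs 0 x - |hs 0 x|) hB2
    exact h5.congr fun N => (key N).symm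
  -- the null set S
  set χ : X → ℝ := S.indicator fun _ => 1 with hχdef
  set k : ℕ → X → ℝ := fun n => if Even n then |hs (n / 2)| else -|hs (n / 2)|
    with hkdef
  have hkU : ∀ n, k n ∈ D.U := by
    intro n
    rw [hkdef]
    by_cases h : Even n
    · simp only [if_pos h]; exact D.abs_mem' (hsU _)
    · simp only [if_neg h]; exact D.neg_mem' (D.abs_mem' (hsU _))
  have hkabs : ∀ n, |k n| = |hs (n / 2)| := by
    intro n
    rw [hkdef]
    by_cases h : Even n
    · simp [if_pos h, abs_abs]
    · simp [if_neg h, abs_abs]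
  have hkabsx : ∀ n x, |k n x| = |hs (n / 2) x| := by
    intro n x
    have := congrFun (hkabs n) x
    simpa [Pi.abs_apply] using this
  have hhalf_summable : Summable fun n => a (n / 2) := by
    have hdouble : ∀ N : ℕ, ∑ i ∈ Finset.range (2 * N), a (i / 2)
        = 2 * ∑ j ∈ Finset.range N, a j := by
      intro N
      induction N with
      | zero => simp
      | succ N ih =>
          have e : 2 * (N + 1) = 2 * N + 1 + 1 := by ring
          rw [e, Finset.sum_range_succ, Finset.sum_range_succ, ih,
            Finset.sum_range_succ]
          have e1 : (2 * N + 1) / 2 = N := by omega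
          have e2 : (2 * N) / 2 = N := by omega
          rw [e1, e2]
          ring
    refine summable_of_sum_range_le (fun n => ha_nonneg _) (c := 2 * ∑' n, a n) ?_
    intro N
    calc ∑ i ∈ Finset.range N, a (i / 2)
        ≤ ∑ i ∈ Finset.range (2 * N), a (i / 2) := by
          refine Finset.sum_le_sum_of_subset_of_nonneg ?_ fun i _ _ => ha_nonneg _
          exact Finset.range_subset_range.mpr (by omega)
      _ = 2 * ∑ j ∈ Finset.range N, a j := hdouble N
      _ ≤ 2 * ∑' n, a n := by
          have := Summable.sum_le_tsum (Finset.range N) (fun i _ => ha_nonneg i) ha_summable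
          linarith
  have hrepχ : D.Rep χ k := by
    refine ⟨hkU, ?_, ?_⟩
    · have : (fun n => D.integral |k n|) = fun n => a (n / 2) :=
        funext fun n => by rw [hkabs n]
      rw [this]
      exact hhalf_summable
    · intro x hx
      have hx' : Summable fun n => |hs n x| := by
        have hinj : Function.Injective (fun n : ℕ => 2 * n) := fun p q h => by simp only at h; omega
        have h1 := hx.comp_injective hinj
        refine h1.congr fun n => ?_
        simp only [Function.comp]
        rw [hkabsx]
        congr 2
        omega
      have hxS : x ∉ S := by
        rw [hSdef]
        simpa using hx'
      have hχx : χ x = 0 := Set.indicator_of_notMem hxS _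
      have heven : HasSum (fun m => k (2 * m) x) (∑' n, |hs n x|) := by
        have he : (fun m => k (2 * m) x) = fun m => |hs m x| := by
          funext m
          rw [hkdef]
          simp only
          rw [if_pos (even_two_mul m)]
          have : 2 * m / 2 = m := by omega
          rw [this, Pi.abs_apply]
        rw [he]
        exact hx'.hasSum
      have hodd : HasSum (fun m => k (2 * m + 1) x) (-(∑' n, |hs n x|)) := by
        have ho : (fun m => k (2 * m + 1) x) = fun m => -|hs m x| := by
          funext m
          rw [hkdef]
          simp only
          rw [if_neg (by simp [Nat.even_add_one, even_two_mul])]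
          have : (2 * m + 1) / 2 = m := by omega
          rw [this]
          simp [Pi.abs_apply]
        rw [ho]
        exact hx'.hasSum.neg
      have hsum := HasSum.even_add_odd (f := fun n => k n x) heven hodd
      rw [hχx]
      simpa using hsum
  have hχU : χ ∈ D.U := hD χ k hrepχ
  have hχ0 : ∀ x, 0 ≤ χ x := fun x => Set.indicator_nonneg (fun _ _ => zero_le_one) x
  have hχnonneg : 0 ≤ D.integral χ := D.integral_nonneg hχU hχ0
  -- ∫χ ≤ ε for every ε > 0
  have hχsmall : ∀ ε : ℝ, 0 < ε → D.integral χ ≤ ε := by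
    intro ε hε
    set C : ℝ := ∑' n, a n with hCdef
    have hC0 : 0 ≤ C := tsum_nonneg ha_nonneg
    set c : ℝ := (C + 1) / ε with hcdef
    have hc0 : 0 < c := div_pos (by linarith) hε
    set P : ℕ → X → ℝ := fun N => ∑ i ∈ Finset.range N, |hs i| with hPdef
    have hPU : ∀ N, P N ∈ D.U := fun N => D.sum_mem' _ (fun i => D.abs_mem' (hsU i)) N
    have hPx : ∀ N x, P N x = ∑ i ∈ Finset.range N, |hs i x| := by
      intro N x
      rw [hPdef]
      simp [Finset.sum_apply, Pi.abs_apply]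
    have hP0 : ∀ N x, 0 ≤ P N x := by
      intro N x
      rw [hPx]
      exact Finset.sum_nonneg fun i _ => abs_nonneg _
    have hPint : ∀ N, D.integral (P N) ≤ C := by
      intro N
      rw [hPdef]
      simp only
      rw [D.integral_sum' _ (fun i => D.abs_mem' (hsU i)) N]
      exact Summable.sum_le_tsum (Finset.range N) (fun i _ => ha_nonneg i) ha_summable
    set q : ℕ → X → ℝ := fun N => χ - χ ⊓ (c⁻¹ • P N) with hqdef
    have hinfU : ∀ N, (χ ⊓ (c⁻¹ • P N)) ∈ D.U :=
      fun N => D.inf_mem hχU (D.smul_mem _ (hPU N))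
    have hqU : ∀ N, q N ∈ D.U := fun N => D.sub_mem' hχU (hinfU N)
    have hPmono : ∀ {N N' : ℕ}, N ≤ N' → ∀ x, P N x ≤ P N' x := by
      intro N N' hNN' x
      rw [hPx, hPx]
      refine Finset.sum_le_sum_of_subset_of_nonneg
        (Finset.range_subset_range.mpr hNN') fun i _ _ => abs_nonneg _
    have hqanti : Antitone q := by
      intro N N' hNN' x
      simp only [hqdef, Pi.sub_apply, Pi.inf_apply, Pi.smul_apply, smul_eq_mul]
      have h1 : c⁻¹ * P N x ≤ c⁻¹ * P N' x :=
        mul_le_mul_of_nonneg_left (hPmono hNN' x) (inv_nonneg.mpr hc0.le)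
      have h2 : min (χ x) (c⁻¹ * P N x) ≤ min (χ x) (c⁻¹ * P N' x) :=
        min_le_min le_rfl h1
      linarith
    have hqlim : ∀ x, Tendsto (fun N => q N x) atTop (𝓝 0) := by
      intro x
      by_cases hx : x ∈ S
      · have hχx : χ x = 1 := Set.indicator_of_mem hx _
        have hxns : ¬ Summable fun n => |hs n x| := hx
        have hBx : Tendsto (fun N => ∑ i ∈ Finset.range N, |hs i x|) atTop atTop :=
          (not_summable_iff_tendsto_nat_atTop_of_nonneg
            (fun n => abs_nonneg (hs n x))).mp hxns
        have hPxt : Tendsto (fun N => c⁻¹ * P N x) atTop atTop := by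
          have := hBx.const_mul_atTop (inv_pos.mpr hc0)
          refine this.congr fun N => ?_
          rw [hPx]
        have hev : ∀ᶠ N in atTop, q N x = 0 := by
          filter_upwards [hPxt.eventually_ge_atTop 1] with N hN
          simp only [hqdef, Pi.sub_apply, Pi.inf_apply, Pi.smul_apply, smul_eq_mul,
            hχx]
          rw [min_eq_left hN]
          ring
        exact Tendsto.congr' (by filter_upwards [hev] with N hN using hN.symm) tendsto_const_nhds
      · have hχx : χ x = 0 := Set.indicator_of_notMem hx _
        have h0 : ∀ N, q N x = 0 := by
          intro N
          simp only [hqdef, Pi.sub_apply, Pi.inf_apply, Pi.smul_apply, smul_eq_mul,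
            hχx]
          rw [min_eq_left (mul_nonneg (inv_nonneg.mpr hc0.le) (hP0 N x))]
          ring
        simpa [h0] using tendsto_const_nhds (α := ℝ) (f := atTop (α := ℕ))
    have hqint := D.integral_tendsto_zero q hqU hqanti hqlim
    have hqlow : ∀ N, D.integral χ - ε ≤ D.integral (q N) := by
      intro N
      have hle : D.integral (χ ⊓ (c⁻¹ • P N)) ≤ c⁻¹ * D.integral (P N) := by
        have h1 : D.integral (χ ⊓ (c⁻¹ • P N)) ≤ D.integral (c⁻¹ • P N) :=
          D.integral_mono' (hinfU N) (D.smul_mem _ (hPU N)) fun x => by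
            simp only [Pi.inf_apply]; exact min_le_right _ _
        rwa [D.integral_smul _ (hPU N)] at h1
      have h2 : c⁻¹ * D.integral (P N) ≤ c⁻¹ * C := by
        have hPN0 : 0 ≤ D.integral (P N) := D.integral_nonneg (hPU N) (hP0 N)
        exact mul_le_mul_of_nonneg_left (hPint N) (inv_nonneg.mpr hc0.le)
      have h3 : c⁻¹ * C ≤ ε := by
        rw [hcdef]
        rw [inv_div]
        rw [div_mul_eq_mul_div]
        rw [div_le_iff₀ (by linarith)]
        nlinarith
      have h4 : D.integral (q N)
          = D.integral χ - D.integral (χ ⊓ (c⁻¹ • P N)) := by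
        rw [hqdef]
        simp only
        rw [D.integral_sub' hχU (hinfU N)]
      linarith
    have := ge_of_tendsto' hqint hqlow
    linarith
  have hχzero : D.integral χ = 0 := by
    refine le_antisymm ?_ hχnonneg
    have h := le_of_forall_pos_le_add (a := D.integral χ) (b := 0)
      (fun ε hε => by simpa using hχsmall ε hε)
    exact h
  have hNull : D.NullSet S := ⟨hχU, hχzero⟩
  -- the functions u and w
  set u : ℕ → X → ℝ := fun N => (f₀ - fs N) ⊔ 0 with hudef
  set w : ℕ → X → ℝ := fun N => (fs N - f₀) ⊔ 0 with hwdef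
  have huU : ∀ N, u N ∈ D.U := fun N =>
    D.sup_mem (D.sub_mem' hf₀U (hfs N)) D.zero_mem
  have hwU : ∀ N, w N ∈ D.U := fun N =>
    D.sup_mem (D.sub_mem' (hfs N) hf₀U) D.zero_mem
  have habs_split : ∀ N, |fs N - f₀| = u N + w N := by
    intro N
    funext x
    simp only [hudef, hwdef, Pi.add_apply, Pi.sup_apply, Pi.sub_apply,
      Pi.zero_apply, Pi.abs_apply]
    rcases le_total (fs N x) (f₀ x) with h | h
    · rw [abs_of_nonpos (by linarith), max_eq_left (by linarith),
        max_eq_right (by linarith)]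
      ring
    · rw [abs_of_nonneg (by linarith), max_eq_right (by linarith),
        max_eq_left (by linarith)]
      ring
  have hw0 : ∀ N, D.integral (w N) = 0 := by
    intro N
    refine D.integral_eq_zero_of_null_support hNull (hwU N) ?_ ?_
    · intro x
      simp only [hwdef, Pi.sup_apply, Pi.sub_apply, Pi.zero_apply]
      exact le_max_right _ _
    · intro x hx
      have hx' : Summable fun n => |hs n x| := by
        by_contra hc
        exact hx hc
      have hle : fs N x ≤ f₀ x := by
        have h1 : fs N x = ∑ i ∈ Finset.range (N + 1), hs i x :=
          (tele_sum fs x N).symm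
        have h2 : f₀ x = ∑' n, hs n x := by rw [hf₀def]; simp [if_pos hx']
        rw [h1, h2]
        refine Summable.sum_le_tsum (Finset.range (N + 1)) ?_ (Summable.of_abs hx')
        intro i hi
        have : N + 1 ≤ i := by
          by_contra hlt
          exact hi (Finset.mem_range.mpr (by omega))
        cases i with
        | zero => omega
        | succ m => exact hs_nonneg m x
      simp only [hwdef, Pi.sup_apply, Pi.sub_apply, Pi.zero_apply]
      rw [max_eq_right (by linarith)]
  have hu_anti : Antitone u := by
    intro N N' hNN' x
    simp only [hudef, Pi.sup_apply, Pi.sub_apply, Pi.zero_apply]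
    have := hmono hNN' x
    exact max_le_max (by linarith) le_rfl
  have hu_lim : ∀ x, Tendsto (fun N => u N x) atTop (𝓝 0) := by
    intro x
    by_cases hx : Summable fun n => |hs n x|
    · have h := hconv x hx
      have h1 : Tendsto (fun N => (f₀ x - fs N x) ⊔ 0) atTop (𝓝 ((f₀ x - f₀ x) ⊔ 0)) :=
        (tendsto_const_nhds.sub h).max tendsto_const_nhds
      have h2 : (f₀ x - f₀ x) ⊔ (0 : ℝ) = 0 := by simp
      rw [h2] at h1
      refine h1.congr fun N => ?_
      simp [hudef, Pi.sup_apply, Pi.sub_apply]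
    · have hd := hdiv x hx
      have hf₀x : f₀ x = 0 := by rw [hf₀def]; simp [if_neg hx]
      have hev : ∀ᶠ N in atTop, u N x = 0 := by
        filter_upwards [hd.eventually_ge_atTop 0] with N hN
        simp only [hudef, Pi.sup_apply, Pi.sub_apply, Pi.zero_apply,
          hf₀x]
        rw [max_eq_right (by linarith)]
      exact Tendsto.congr' (by filter_upwards [hev] with N hN using hN.symm) tendsto_const_nhds
  have hu_int : Tendsto (fun N => D.integral (u N)) atTop (𝓝 0) :=
    D.integral_tendsto_zero u huU hu_anti hu_lim
  have hint_abs : ∀ N, D.integral |fs N - f₀| = D.integral (u N) := by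
    intro N
    rw [habs_split N, D.integral_add (huU N) (hwU N), hw0 N, add_zero]
  have hmain : Tendsto (fun N => D.integral |fs N - f₀|) atTop (𝓝 0) :=
    hu_int.congr fun N => (hint_abs N).symm
  have hIconv : Tendsto (fun N => D.integral (fs N)) atTop (𝓝 (D.integral f₀)) := by
    have h1 : Tendsto (fun N => D.integral (fs N) - D.integral f₀) atTop (𝓝 0) := by
      refine squeeze_zero_norm (fun N => ?_) hmain
      rw [Real.norm_eq_abs, ← D.integral_sub' (hfs N) hf₀U]
      exact D.abs_integral_le' (D.sub_mem' (hfs N) hf₀U)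
    have h2 := h1.add (tendsto_const_nhds (x := D.integral f₀) (f := atTop (α := ℕ)))
    simpa using h2
  have hMf : |D.integral f₀| ≤ M :=
    le_of_tendsto hIconv.abs (Eventually.of_forall hM)
  refine ⟨f₀, hf₀U, hmain, ⟨S, hNull, ?_⟩, hMf⟩
  intro x hx
  have hx' : Summable fun n => |hs n x| := by
    by_contra hc
    exact hx hc
  exact hconv x hx'

open DaniellSpace in
/-- Monotone Convergence Theorem: in a complete Daniell space, a pointwise monotone
sequence in `𝒰` with `|∫fₙ| ≤ M` converges in norm and a.e. to some `f ∈ 𝒰` with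
`|∫f| ≤ M`. -/
theorem daniell_monotone_convergence {X : Type*} [Nonempty X] (D : DaniellSpace X)
    (hD : D.Complete) (fs : ℕ → X → ℝ) (hfs : ∀ n, fs n ∈ D.U)
    (hmono : Monotone fs ∨ Antitone fs)
    (M : ℝ) (hM : ∀ n, |D.integral (fs n)| ≤ M) :
    ∃ f ∈ D.U,
      Tendsto (fun n => D.integral |fs n - f|) atTop (𝓝 (0 : ℝ)) ∧
      (∃ S : Set X, D.NullSet S ∧ ∀ x ∉ S, Tendsto (fun n => fs n x) atTop (𝓝 (f x))) ∧
      |D.integral f| ≤ M := by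
  rcases hmono with h | h
  · exact daniell_mct_mono D hD fs hfs h M hM
  · set gs : ℕ → X → ℝ := fun n => -(fs n) with hgs
    have hgsU : ∀ n, gs n ∈ D.U := fun n => D.neg_mem' (hfs n)
    have hgsmono : Monotone gs := by
      intro p q hpq x
      simp only [hgs, Pi.neg_apply]
      have := h hpq x
      linarith
    have hgsM : ∀ n, |D.integral (gs n)| ≤ M := by
      intro n
      rw [hgs]
      simp only
      rw [D.integral_neg' (hfs n), abs_neg]
      exact hM n
    obtain ⟨g, hgU, hg1, ⟨S, hS, hg2⟩, hg3⟩ :=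
      daniell_mct_mono D hD gs hgsU hgsmono M hgsM
    refine ⟨-g, D.neg_mem' hgU, ?_, ⟨S, hS, ?_⟩, ?_⟩
    · refine hg1.congr fun n => ?_
      congr 1
      funext x
      simp only [Pi.abs_apply, Pi.sub_apply, Pi.neg_apply, hgs]
      rw [show -(fs n x) - g x = -(fs n x - -(g x)) by ring, abs_neg]
    · intro x hx
      have h1 := (hg2 x hx).neg
      refine h1.congr fun n => ?_
      simp [hgs]
    · rw [D.integral_neg' hgU, abs_neg]
      exact hg3
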